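/- Let H = H(2) be the 7×7 toy matrix at the exceptional coupling g = 2, and let M = H − 7·I. Then M⁴ = 0, M³ ≠ 0, and rank(M) = 5; consequently the eigenvalue 7 has algebraic multiplicity 7 and geometric multiplicity 2. -/

import Mathlib

open Matrix Real Polynomial

noncomputable def H2 : Matrix (Fin 7) (Fin 7) ℝ :=
  !![1, 0, 2 * Real.sqrt 3, 0, 0, 0, 0;
     0, 3, 0, 2 * Real.sqrt 2, 0, 0, 0;
     -(2 * Real.sqrt 3), 0, 5, 0, 4, 0, 0;
     0, -(2 * Real.sqrt 2), 0, 7, 0, 2 * Real.sqrt 2, 0;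
     0, 0, -4, 0, 9, 0, 2 * Real.sqrt 3;
     0, 0, 0, -(2 * Real.sqrt 2), 0, 11, 0;
     0, 0, 0, 0, -(2 * Real.sqrt 3), 0, 13]

noncomputable def M6 : Matrix (Fin 7) (Fin 7) ℝ := H2 - (7 : ℝ) • 1

noncomputable def A6 : Matrix (Fin 7) (Fin 7) ℝ :=
  !![24, 0, -(16 * Real.sqrt 3), 0, 8 * Real.sqrt 3, 0, 0;
     0, 8, 0, -(8 * Real.sqrt 2), 0, 8, 0;
     16 * Real.sqrt 3, 0, -24, 0, 0, 0, 8 * Real.sqrt 3;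
     0, 8 * Real.sqrt 2, 0, -16, 0, 8 * Real.sqrt 2, 0;
     8 * Real.sqrt 3, 0, 0, 0, -24, 0, 16 * Real.sqrt 3;
     0, 8, 0, -(8 * Real.sqrt 2), 0, 8, 0;
     0, 0, 8 * Real.sqrt 3, 0, -(16 * Real.sqrt 3), 0, 24]

@[simp] lemma cons_val_five' {α : Type*} {m : ℕ} (x : α) (u : Fin m.succ.succ.succ.succ.succ → α) :
    Matrix.vecCons x u 5 = Matrix.vecHead (Matrix.vecTail (Matrix.vecTail (Matrix.vecTail (Matrix.vecTail u)))) := rfl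
@[simp] lemma cons_val_six' {α : Type*} {m : ℕ} (x : α) (u : Fin m.succ.succ.succ.succ.succ.succ → α) :
    Matrix.vecCons x u 6 = Matrix.vecHead (Matrix.vecTail (Matrix.vecTail (Matrix.vecTail (Matrix.vecTail (Matrix.vecTail u))))) := rfl
@[simp] lemma tail_const' {α : Type*} {n : ℕ} (a : α) :
    Matrix.vecTail (fun _ : Fin (n+1) => a) = fun _ => a := rfl

lemma s3s3 : Real.sqrt 3 * Real.sqrt 3 = 3 := Real.mul_self_sqrt (by norm_num)
lemma s2s2 : Real.sqrt 2 * Real.sqrt 2 = 2 := Real.mul_self_sqrt (by norm_num)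

set_option maxHeartbeats 2000000 in
lemma hM2sq : M6 * M6 = A6 := by
  ext i j
  fin_cases i <;> fin_cases j <;>
    simp (config := { decide := true }) [M6, H2, A6, Matrix.mul_apply,
      Fin.sum_univ_seven, Matrix.sub_apply,
      Matrix.smul_apply, Matrix.one_apply] <;>
    nlinarith [s2s2, s3s3]

set_option maxHeartbeats 2000000 in
lemma hA6sq : A6 * A6 = 0 := by
  ext i j
  fin_cases i <;> fin_cases j <;>
    simp (config := { decide := true }) [A6, Matrix.mul_apply,
      Fin.sum_univ_seven] <;>
    nlinarith [s2s2, s3s3]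

lemma hM4 : M6 ^ 4 = 0 := by
  have : M6 ^ 4 = (M6 * M6) * (M6 * M6) := by
    rw [show (4 : ℕ) = 2 + 2 from rfl, pow_add, sq]
  rw [this, hM2sq, hA6sq]

lemma hM3entry : (M6 ^ 3) 0 0 = -48 := by
  have : M6 ^ 3 = (M6 * M6) * M6 := by
    rw [show (3 : ℕ) = 2 + 1 from rfl, pow_add, sq, pow_one]
  rw [this, hM2sq]
  simp (config := { decide := true }) [M6, H2, A6, Matrix.mul_apply,
    Fin.sum_univ_seven, Matrix.sub_apply,
    Matrix.smul_apply, Matrix.one_apply]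
  nlinarith [s2s2, s3s3]

lemma hM3ne : M6 ^ 3 ≠ 0 := by
  intro h
  have := hM3entry
  rw [h] at this
  simp at this

-- kernel vectors
noncomputable def v1 : Fin 7 → ℝ := ![0, 1, 0, Real.sqrt 2, 0, 1, 0]
noncomputable def v2 : Fin 7 → ℝ := ![Real.sqrt 3, 0, 3, 0, 3, 0, Real.sqrt 3]

lemma hv1 : M6.mulVec v1 = 0 := by
  ext i
  fin_cases i <;>
    simp (config := { decide := true }) [M6, H2, v1, Matrix.mulVec, dotProduct,
      Fin.sum_univ_seven, Matrix.sub_apply,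
      Matrix.smul_apply, Matrix.one_apply] <;>
    nlinarith [s2s2, s3s3]

lemma hv2 : M6.mulVec v2 = 0 := by
  ext i
  fin_cases i <;>
    simp (config := { decide := true }) [M6, H2, v2, Matrix.mulVec, dotProduct,
      Fin.sum_univ_seven, Matrix.sub_apply,
      Matrix.smul_apply, Matrix.one_apply] <;>
    nlinarith [s2s2, s3s3]

-- if x ∈ ker and x 1 = x 2 = 0 then x = 0
lemma ker_zero (x : Fin 7 → ℝ) (hx : M6.mulVec x = 0) (h1 : x 1 = 0) (h2 : x 2 = 0) :
    x = 0 := by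
  have s2pos : (0:ℝ) < Real.sqrt 2 := Real.sqrt_pos.mpr (by norm_num)
  have s3pos : (0:ℝ) < Real.sqrt 3 := Real.sqrt_pos.mpr (by norm_num)
  have e := fun i => congrFun hx i
  have e0 := e 0; have e1 := e 1; have e2 := e 2; have e3 := e 3
  have e6 := e 6
  simp (config := { decide := true }) [M6, H2, Matrix.mulVec, dotProduct,
    Fin.sum_univ_seven, Matrix.sub_apply,
    Matrix.smul_apply, Matrix.one_apply] at e0 e1 e2 e3 e6
  have hx0 : x 0 = 0 := by nlinarith [e0, s3s3]
  have hx3 : x 3 = 0 := by nlinarith [e1, s2s2, s2pos]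
  have hx4 : x 4 = 0 := by nlinarith [e2, s3s3]
  have hx5 : x 5 = 0 := by nlinarith [e3, s2s2, s2pos]
  have hx6 : x 6 = 0 := by nlinarith [e6, s3s3, s3pos]
  funext i
  fin_cases i <;> simpa using (by assumption : _ = (0:ℝ))


lemma v1_mem : v1 ∈ LinearMap.ker M6.mulVecLin := by
  simpa [Matrix.mulVecLin_apply] using hv1

lemma v2_mem : v2 ∈ LinearMap.ker M6.mulVecLin := by
  simpa [Matrix.mulVecLin_apply] using hv2

noncomputable def pr12 : (Fin 7 → ℝ) →ₗ[ℝ] (Fin 2 → ℝ) where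
  toFun x := ![x 1, x 2]
  map_add' x y := by funext i; fin_cases i <;> simp
  map_smul' c x := by funext i; fin_cases i <;> simp

lemma finrank_ker_le : Module.finrank ℝ ↥(LinearMap.ker M6.mulVecLin) ≤ 2 := by
  have hinj : Function.Injective
      (pr12 ∘ₗ (LinearMap.ker M6.mulVecLin).subtype) := by
    rw [← LinearMap.ker_eq_bot, LinearMap.ker_eq_bot']
    intro m hm
    obtain ⟨x, hx⟩ := m
    have hx' : M6.mulVec x = 0 := hx
    have h1 : x 1 = 0 := by
      have := congrFun (show pr12 x = 0 from hm) 0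
      simpa [pr12] using this
    have h2 : x 2 = 0 := by
      have := congrFun (show pr12 x = 0 from hm) 1
      simpa [pr12] using this
    exact Subtype.ext (ker_zero x hx' h1 h2)
  have := LinearMap.finrank_le_finrank_of_injective hinj
  simpa [Module.finrank_fintype_fun_eq_card] using this

lemma lin_indep : LinearIndependent ℝ
    ![(⟨v1, v1_mem⟩ : ↥(LinearMap.ker M6.mulVecLin)), ⟨v2, v2_mem⟩] := by
  rw [LinearIndependent.pair_iff]
  intro s t hst
  have h := congrArg Subtype.val hst
  have h1 := congrFun h 1
  have h2 := congrFun h 2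
  simp [v1, v2] at h1 h2
  constructor
  · simpa using h1
  · linarith

lemma finrank_ker : Module.finrank ℝ ↥(LinearMap.ker M6.mulVecLin) = 2 := by
  refine le_antisymm finrank_ker_le ?_
  have := lin_indep.fintype_card_le_finrank
  simpa using this

lemma hrank : M6.rank = 5 := by
  have h := LinearMap.finrank_range_add_finrank_ker M6.mulVecLin
  rw [finrank_ker, Module.finrank_fintype_fun_eq_card] at h
  simp only [Fintype.card_fin] at h
  have : M6.rank = Module.finrank ℝ ↥(LinearMap.range M6.mulVecLin) := rfl
  omega

lemma isNilpotent_charpoly_sub_pow_gen {n : Type} [Fintype n] [DecidableEq n] (N : Matrix n n ℝ) (k : ℕ)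
    (hN : N ^ k = 0) : IsNilpotent (N.charpoly - X ^ (Fintype.card n)) :=
  Matrix.isNilpotent_charpoly_sub_pow_of_isNilpotent ⟨k, hN⟩

lemma hM6charpoly : M6.charpoly = X ^ 7 := by
  have h := isNilpotent_charpoly_sub_pow_gen M6 4 hM4
  have h0 : M6.charpoly - X ^ (Fintype.card (Fin 7)) = 0 := h.eq_zero
  rw [Fintype.card_fin] at h0
  exact sub_eq_zero.mp h0

lemma hcharpoly : H2.charpoly = (X - C 7) ^ 7 := by
  set φ : ℝ[X] →+* ℝ[X] := (aeval (X - C (7:ℝ)) : ℝ[X] →ₐ[ℝ] ℝ[X]).toRingHom with hφ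
  have key : (Matrix.charmatrix M6).map φ = Matrix.charmatrix H2 := by
    ext i j
    rcases eq_or_ne i j with rfl | hij
    · rw [Matrix.map_apply, Matrix.charmatrix_apply_eq, Matrix.charmatrix_apply_eq]
      simp only [hφ, map_sub, AlgHom.toRingHom_eq_coe, AlgHom.coe_toRingHom, aeval_X, aeval_C]
      have : M6 i i = H2 i i - 7 := by
        simp [M6, Matrix.sub_apply, Matrix.smul_apply, Matrix.one_apply]
      rw [this]
      simp only [map_sub, Polynomial.algebraMap_eq]
      ring_nf
    · rw [Matrix.map_apply, Matrix.charmatrix_apply_ne _ _ _ hij,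
        Matrix.charmatrix_apply_ne _ _ _ hij]
      have : M6 i j = H2 i j := by
        simp [M6, Matrix.sub_apply, Matrix.smul_apply, Matrix.one_apply, hij]
      simp [hφ, this, aeval_C]
  have h2 : H2.charpoly = φ M6.charpoly := by
    rw [Matrix.charpoly, Matrix.charpoly, RingHom.map_det, RingHom.mapMatrix_apply, key]
  rw [h2, hM6charpoly]
  simp [hφ, map_pow]

theorem stmt_6 :
    M6 ^ 4 = 0 ∧ M6 ^ 3 ≠ 0 ∧ M6.rank = 5 ∧
    H2.charpoly = (X - C 7) ^ 7 ∧
    Module.finrank ℝ ↥(LinearMap.ker M6.mulVecLin) = 2 := by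
  exact ⟨hM4, hM3ne, hrank, hcharpoly, finrank_ker⟩
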